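/- A nonzero graded R-submodule N of a graded R-module M is graded 2-absorbing coprimary if and only if for every pair of homogeneous elements x, y of R, either x^n N ⊆ xyN for some positive integer n, or y^m N ⊆ xyN for some positive integer m, or xy ∈ Ann_R(N). -/

import Mathlib

open DirectSum Pointwise

variable {G : Type} [AddGroup G] [DecidableEq G]
variable {R : Type} [CommRing R] (𝒜 : G → AddSubgroup R) [GradedRing 𝒜]
variable {M : Type} [AddCommGroup M] [Module R M] (ℳ : G → AddSubgroup M)
  [SetLike.GradedSMul 𝒜 ℳ] [DirectSum.Decomposition ℳ]

/-- A submodule is graded if it contains every homogeneous component of each of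
its elements. -/
def IsGradedSubmodule (N : Submodule R M) : Prop :=
  ∀ (g : G) (m : M), m ∈ N → (DirectSum.decompose ℳ m g : M) ∈ N

/-- The graded radical of an ideal: all `r` such that for each `g` some positive
power of the degree-`g` component of `r` lies in `P`. -/
def gradRad (P : Ideal R) : Set R :=
  {r : R | ∀ g : G, ∃ n : ℕ, 0 < n ∧ ((DirectSum.decompose 𝒜 r g : R)) ^ n ∈ P}

/-- Graded 2-absorbing coprimary submodule. -/
def IsGr2AbsCoprimary (N : Submodule R M) : Prop :=
  N ≠ ⊥ ∧ IsGradedSubmodule ℳ N ∧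
  ∀ x y : R, (∃ g, x ∈ 𝒜 g) → (∃ g, y ∈ 𝒜 g) →
    ∀ K : Submodule R M, IsGradedSubmodule ℳ K →
      (∀ m ∈ N, (x * y) • m ∈ K) →
      x ∈ gradRad 𝒜 (K.colon N) ∨ y ∈ gradRad 𝒜 (K.colon N) ∨ x * y ∈ N.annihilator

/-- Graded 2-absorbing primary ideal. -/
def IsGr2AbsPrimaryIdeal (P : Ideal R) : Prop :=
  P ≠ ⊤ ∧ (∀ (g : G) (r : R), r ∈ P → (DirectSum.decompose 𝒜 r g : R) ∈ P) ∧
  ∀ a b c : R, (∃ g, a ∈ 𝒜 g) → (∃ g, b ∈ 𝒜 g) → (∃ g, c ∈ 𝒜 g) →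
    a * b * c ∈ P → a * b ∈ P ∨ a * c ∈ gradRad 𝒜 P ∨ b * c ∈ gradRad 𝒜 P

/-- Components of a homogeneous scalar multiple. -/
lemma decompose_homog_smul {i : G} {a : R} (ha : a ∈ 𝒜 i) (m : M) (g : G) :
    (DirectSum.decompose ℳ (a • m) g : M) = a • (DirectSum.decompose ℳ m (-i + g) : M) := by
  induction m using DirectSum.Decomposition.inductionOn ℳ with
  | zero => simp
  | @homogeneous j m =>
    have hm : (m : M) ∈ ℳ j := m.2
    have ham : a • (m : M) ∈ ℳ (i + j) := SetLike.GradedSMul.smul_mem ha hm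
    by_cases hg : g = i + j
    · subst hg
      rw [DirectSum.decompose_of_mem_same ℳ ham,
        neg_add_cancel_left i j, DirectSum.decompose_of_mem_same ℳ hm]
    · have hne : j ≠ -i + g := fun h =>
        hg (by rw [h]; exact (add_neg_cancel_left i g).symm)
      rw [DirectSum.decompose_of_mem_ne ℳ ham (Ne.symm hg),
        DirectSum.decompose_of_mem_ne ℳ hm hne, smul_zero]
  | add m m' hmm hm' =>
    rw [smul_add, DirectSum.decompose_add, DirectSum.decompose_add,
      DirectSum.add_apply, DirectSum.add_apply, AddSubgroup.coe_add,
      AddSubgroup.coe_add, hmm, hm', smul_add]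

theorem stmt_6 (N : Submodule R M) (hN0 : N ≠ ⊥) (hNg : IsGradedSubmodule ℳ N) :
    IsGr2AbsCoprimary 𝒜 ℳ N ↔
      ∀ x y : R, (∃ g, x ∈ 𝒜 g) → (∃ g, y ∈ 𝒜 g) →
        (∃ n : ℕ, 0 < n ∧ x ^ n • N ≤ (x * y) • N) ∨
        (∃ m : ℕ, 0 < m ∧ y ^ m • N ≤ (x * y) • N) ∨
        x * y ∈ N.annihilator := by
  constructor
  · rintro ⟨-, -, hmain⟩ x y hx hy
    obtain ⟨gx, hgx⟩ := hx
    obtain ⟨gy, hgy⟩ := hy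
    set K : Submodule R M := (x * y) • N with hK
    have hKg : IsGradedSubmodule ℳ K := by
      intro g m hm
      obtain ⟨m', hm', rfl⟩ := Set.mem_smul_set.mp hm
      rw [decompose_homog_smul 𝒜 ℳ (SetLike.mul_mem_graded hgx hgy) m' g]
      exact Submodule.smul_mem_pointwise_smul _ _ _ (hNg _ _ hm')
    have hsub : ∀ m ∈ N, (x * y) • m ∈ K := fun m hm =>
      Submodule.smul_mem_pointwise_smul _ _ _ hm
    rcases hmain x y ⟨gx, hgx⟩ ⟨gy, hgy⟩ K hKg hsub with h | h | h
    · obtain ⟨n, hn, hxn⟩ := h gx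
      rw [DirectSum.decompose_of_mem_same 𝒜 hgx] at hxn
      refine Or.inl ⟨n, hn, ?_⟩
      intro m hm
      obtain ⟨m', hm', rfl⟩ := Set.mem_smul_set.mp hm
      exact Submodule.mem_colon.mp hxn m' hm'
    · obtain ⟨n, hn, hyn⟩ := h gy
      rw [DirectSum.decompose_of_mem_same 𝒜 hgy] at hyn
      refine Or.inr (Or.inl ⟨n, hn, ?_⟩)
      intro m hm
      obtain ⟨m', hm', rfl⟩ := Set.mem_smul_set.mp hm
      exact Submodule.mem_colon.mp hyn m' hm'
    · exact Or.inr (Or.inr h)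
  · intro hcond
    refine ⟨hN0, hNg, fun x y hx hy K _ hK => ?_⟩
    obtain ⟨gx, hgx⟩ := hx
    obtain ⟨gy, hgy⟩ := hy
    have hzero : ∀ (z : R) (gz g : G), z ∈ 𝒜 gz →
        (∀ m ∈ N, z ^ (1 : ℕ) • m ∈ K) → ∃ n : ℕ, 0 < n ∧
          (DirectSum.decompose 𝒜 z g : R) ^ n ∈ K.colon N := by
      intro z gz g hz hzK
      by_cases hg : g = gz
      · subst hg
        rw [DirectSum.decompose_of_mem_same 𝒜 hz]
        exact ⟨1, one_pos, Submodule.mem_colon.mpr (by simpa using hzK)⟩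
      · rw [DirectSum.decompose_of_mem_ne 𝒜 hz (Ne.symm hg)]
        exact ⟨1, one_pos, Submodule.mem_colon.mpr (by simp)⟩
    rcases hcond x y ⟨gx, hgx⟩ ⟨gy, hgy⟩ with ⟨n, hn, hle⟩ | ⟨n, hn, hle⟩ | h
    · refine Or.inl fun g => ?_
      by_cases hg : g = gx
      · subst hg
        rw [DirectSum.decompose_of_mem_same 𝒜 hgx]
        refine ⟨n, hn, Submodule.mem_colon.mpr fun m hm => ?_⟩
        obtain ⟨m', hm', heq⟩ := Set.mem_smul_set.mp
          (hle (Submodule.smul_mem_pointwise_smul m (x ^ n) N hm))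
        rw [← heq]
        exact hK m' hm'
      · rw [DirectSum.decompose_of_mem_ne 𝒜 hgx (Ne.symm hg)]
        exact ⟨1, one_pos, Submodule.mem_colon.mpr (by simp)⟩
    · refine Or.inr (Or.inl fun g => ?_)
      by_cases hg : g = gy
      · subst hg
        rw [DirectSum.decompose_of_mem_same 𝒜 hgy]
        refine ⟨n, hn, Submodule.mem_colon.mpr fun m hm => ?_⟩
        obtain ⟨m', hm', heq⟩ := Set.mem_smul_set.mp
          (hle (Submodule.smul_mem_pointwise_smul m (y ^ n) N hm))
        rw [← heq]
        exact hK m' hm'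
      · rw [DirectSum.decompose_of_mem_ne 𝒜 hgy (Ne.symm hg)]
        exact ⟨1, one_pos, Submodule.mem_colon.mpr (by simp)⟩
    · exact Or.inr (Or.inr h)
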